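/- With $\Gamma_k$ as above and $C = C_0/4$ (where $C_0$ is the constant for which $P(\Gamma_{n+1} - \Gamma_n > C_0 N^2 \mid \mathcal{F}_{\Gamma_n}) > 1/2$), there is a constant $c > 0$ such that for all $k \geq 1$, $P(\Gamma_k < C k N^2) \leq e^{-ck}$. In particular $\sum_{k=1}^\infty P(\Gamma_k < CkN^2) < \infty$, uniformly over all balanced environments. -/

import Mathlib

open MeasureTheory Filter

/-- Partial geometric sums with ratio in `[0,1)` are bounded. -/
lemma stmt6_geom_aux {r : ℝ} (h0 : 0 ≤ r) (h1 : r < 1) (n : ℕ) :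
    ∑ i ∈ Finset.range n, r ^ i ≤ (1 - r)⁻¹ := by
  have hr1 : r ≠ 1 := ne_of_lt h1
  have hpos : 0 < 1 - r := by linarith
  rw [geom_sum_eq hr1]
  have heq : (r ^ n - 1) / (r - 1) = (1 - r ^ n) / (1 - r) := by
    rw [← neg_div_neg_eq]; ring_nf
  rw [heq, inv_eq_one_div]
  exact (div_le_div_iff_of_pos_right hpos).mpr (by linarith [pow_nonneg h0 n])

/-- with `Γ_k` the successive exit times as above and `C = C₀/4`,
`P(Γ_k < C k N²)` decays exponentially in `k`, uniformly over all balanced environments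
(i.e. the constant `c` depends only on `C₀`, not on the probability space or the process). -/
theorem stmt6 (C₀ : ℝ) (hC₀ : 0 < C₀) : ∃ c : ℝ, 0 < c ∧
    ∀ (Ω : Type) (m : MeasurableSpace Ω) (P : Measure Ω) (_ : IsProbabilityMeasure P)
      (ℱ : Filtration ℕ m) (N : ℕ) (Γ : ℕ → Ω → ℕ) (hstop : ∀ k, IsStoppingTime ℱ (fun ω => (Γ k ω : WithTop ℕ))),
      (∀ ω, Γ 0 ω = 0) →
      (∀ k ω, Γ k ω < Γ (k + 1) ω) →
      -- each increment exceeds C₀ N² with conditional probability more than 1/2: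
      (∀ k, ∀ᵐ ω ∂P,
        (1 : ℝ) / 2 <
          (P[(fun ω' => if C₀ * (N : ℝ) ^ 2 < ((Γ (k + 1) ω' : ℝ) - (Γ k ω' : ℝ))
              then (1 : ℝ) else 0)|(hstop k).measurableSpace]) ω) →
      (∀ k : ℕ, 1 ≤ k →
        (P {ω | (Γ k ω : ℝ) < (C₀ / 4) * k * (N : ℝ) ^ 2}).toReal ≤ Real.exp (-c * k)) ∧
      ∃ M : ℝ, ∀ n : ℕ,
        ∑ k ∈ Finset.Icc 1 n,
          (P {ω | (Γ k ω : ℝ) < (C₀ / 4) * k * (N : ℝ) ^ 2}).toReal ≤ M := by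
  classical
  set c : ℝ := (3 / 4) * Real.log 3 - Real.log 2 with hc_def
  have hlog : Real.log 2 < (3 / 4) * Real.log 3 := by
    have h16 : Real.log 16 < Real.log 27 := Real.log_lt_log (by norm_num) (by norm_num)
    have h2 : Real.log 16 = 4 * Real.log 2 := by
      rw [show (16 : ℝ) = 2 ^ 4 by norm_num, Real.log_pow]; push_cast; ring
    have h3 : Real.log 27 = 3 * Real.log 3 := by
      rw [show (27 : ℝ) = 3 ^ 3 by norm_num, Real.log_pow]; push_cast; ring
    rw [h2, h3] at h16; linarith
  have hc : 0 < c := by simp only [hc_def]; linarith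
  refine ⟨c, hc, ?_⟩
  intro Ω m P hP ℱ N Γ hstop h0 hmono hcond
  -- abbreviations
  set p : ℝ := C₀ * (N : ℝ) ^ 2 with hp_def
  have hp0 : 0 ≤ p := by positivity
  set I : ℕ → Ω → ℝ := fun k ω =>
    if p < ((Γ (k + 1) ω : ℝ) - (Γ k ω : ℝ)) then (1 : ℝ) else 0 with hI_def
  set g : ℕ → Ω → ℝ := fun k ω => 3 - 2 * I k ω with hg_def
  -- basic measurability
  have hΓmono : ∀ j l : ℕ, j ≤ l → ∀ ω, Γ j ω ≤ Γ l ω := by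
    intro j l hjl ω
    induction l with
    | zero =>
      have : j = 0 := Nat.le_zero.mp hjl
      simp [this]
    | succ l ih =>
      rcases Nat.lt_or_ge j (l + 1) with h | h
      · exact le_trans (ih (by omega)) (hmono l ω).le
      · have : j = l + 1 := by omega
        simp [this]
  have hGle : ∀ j l : ℕ, j ≤ l →
      (hstop j).measurableSpace ≤ (hstop l).measurableSpace := fun j l hjl =>
    (hstop j).measurableSpace_mono (hstop l) (fun ω => WithTop.coe_le_coe.mpr (hΓmono j l hjl ω))
  have hle : ∀ j, (hstop j).measurableSpace ≤ m := fun j => (hstop j).measurableSpace_le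
  have hΓm : ∀ j, Measurable[(hstop j).measurableSpace] (Γ j) := fun j => by
    have h := (hstop j).measurable
    refine @measurable_to_countable' ℕ Ω _ _ (hstop j).measurableSpace (Γ j) (fun n => ?_)
    have : Γ j ⁻¹' {n} = (fun ω => (Γ j ω : WithTop ℕ)) ⁻¹' {(n : WithTop ℕ)} := by ext ω; simp
    rw [this]; exact h (measurableSet_singleton _)
  have hincm : ∀ k, Measurable[(hstop (k + 1)).measurableSpace]
      (fun ω => ((Γ (k + 1) ω : ℝ) - (Γ k ω : ℝ))) := by
    intro k
    exact ((measurable_from_top (f := fun n : ℕ => (n : ℝ))).comp (hΓm (k + 1))).sub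
      ((measurable_from_top (f := fun n : ℕ => (n : ℝ))).comp
        ((hΓm k).mono (hGle k (k + 1) (Nat.le_succ k)) le_rfl))
  have hIm : ∀ k, Measurable[(hstop (k + 1)).measurableSpace] (I k) := by
    intro k
    exact Measurable.ite ((hincm k) measurableSet_Ioi) measurable_const measurable_const
  have hIm' : ∀ k, Measurable (I k) := fun k => (hIm k).mono (hle (k + 1)) le_rfl
  have hIbd : ∀ k ω, 0 ≤ I k ω ∧ I k ω ≤ 1 := by
    intro k ω; simp only [hI_def]; split_ifs <;> norm_num
  have hIint : ∀ k, Integrable (I k) P := by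
    intro k
    refine Integrable.mono' (integrable_const (1 : ℝ)) (hIm' k).aestronglyMeasurable ?_
    filter_upwards with ω
    rw [Real.norm_eq_abs, abs_le]
    exact ⟨by linarith [(hIbd k ω).1], (hIbd k ω).2⟩
  have hgm : ∀ k, Measurable[(hstop (k + 1)).measurableSpace] (g k) := by
    intro k
    exact (measurable_const.sub (measurable_const.mul (hIm k)))
  have hgbd : ∀ k ω, 1 ≤ g k ω ∧ g k ω ≤ 3 := by
    intro k ω
    have := hIbd k ω
    constructor <;> simp only [hg_def] <;> linarith [this.1, this.2]
  have hgint : ∀ k, Integrable (g k) P := by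
    intro k
    exact (integrable_const (3 : ℝ)).sub ((hIint k).const_mul 2)
  -- conditional expectation bound: E[g k | F_{Γ k}] ≤ 2 a.e.
  have hgcond : ∀ k, ∀ᵐ ω ∂P, (P[g k|(hstop k).measurableSpace]) ω ≤ 2 := by
    intro k
    have h1 : g k = (fun _ => (3 : ℝ)) - (2 : ℝ) • I k := by
      funext ω; simp [hg_def, smul_eq_mul]
    have h2 : P[g k|(hstop k).measurableSpace] =ᵐ[P]
        P[(fun _ => (3 : ℝ))|(hstop k).measurableSpace]
          - P[(2 : ℝ) • I k|(hstop k).measurableSpace] := by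
      rw [h1]; exact condExp_sub (integrable_const 3) ((hIint k).smul (2 : ℝ)) _
    have h3 : P[(2 : ℝ) • I k|(hstop k).measurableSpace] =ᵐ[P]
        (2 : ℝ) • P[I k|(hstop k).measurableSpace] := condExp_smul (2 : ℝ) (I k) _
    have h4 : P[(fun _ => (3 : ℝ))|(hstop k).measurableSpace] = fun _ => (3 : ℝ) :=
      condExp_const (hle k) 3
    filter_upwards [h2, h3, hcond k] with ω hω2 hω3 hωc
    have hIc : (1 : ℝ) / 2 < (P[I k|(hstop k).measurableSpace]) ω := hωc
    rw [hω2, Pi.sub_apply, h4, hω3, Pi.smul_apply, smul_eq_mul]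
    show (3 : ℝ) - 2 * (P[I k|(hstop k).measurableSpace]) ω ≤ 2
    linarith
  -- products
  set G : ℕ → Ω → ℝ := fun k ω => ∏ n ∈ Finset.range k, g n ω with hG_def
  have hGm : ∀ k, Measurable[(hstop k).measurableSpace] (G k) := by
    intro k
    apply Finset.measurable_prod
    intro n hn
    have hnk : n + 1 ≤ k := Finset.mem_range.mp hn
    exact (hgm n).mono (hGle (n + 1) k hnk) le_rfl
  have hGpos : ∀ k ω, 1 ≤ G k ω := by
    intro k ω
    calc (1 : ℝ) = ∏ _n ∈ Finset.range k, (1 : ℝ) := by simp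
      _ ≤ ∏ n ∈ Finset.range k, g n ω :=
        Finset.prod_le_prod (fun n _ => zero_le_one) (fun n _ => (hgbd n ω).1)
  have hGbd : ∀ k ω, G k ω ≤ 3 ^ k := by
    intro k ω
    calc G k ω ≤ ∏ n ∈ Finset.range k, (3 : ℝ) :=
          Finset.prod_le_prod (fun n _ => by linarith [(hgbd n ω).1]) (fun n _ => (hgbd n ω).2)
      _ = 3 ^ k := by simp
  have hGint : ∀ k, Integrable (G k) P := by
    intro k
    refine Integrable.mono' (integrable_const ((3 : ℝ) ^ k))
      ((hGm k).mono (hle k) le_rfl).aestronglyMeasurable ?_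
    filter_upwards with ω
    rw [Real.norm_eq_abs, abs_le]
    exact ⟨by linarith [hGpos k ω, pow_nonneg (by norm_num : (0:ℝ) ≤ 3) k], hGbd k ω⟩
  -- exponential moment bound via the tower property
  have hGexp : ∀ k, ∫ ω, G k ω ∂P ≤ 2 ^ k := by
    intro k
    induction k with
    | zero => simp [hG_def]
    | succ k ih =>
      have hsplit : G (k + 1) = fun ω => G k ω * g k ω := by
        funext ω; simp [hG_def, Finset.prod_range_succ]
      have hGgint : Integrable (fun ω => G k ω * g k ω) P := by
        rw [← hsplit]; exact hGint (k + 1)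
      have hpull : P[(fun ω => G k ω * g k ω)|(hstop k).measurableSpace] =ᵐ[P]
          fun ω => G k ω * (P[g k|(hstop k).measurableSpace]) ω := by
        have := condExp_mul_of_stronglyMeasurable_left (μ := P) (hGm k).stronglyMeasurable
          hGgint (hgint k)
        filter_upwards [this] with ω hω
        exact hω
      have h1 : ∫ ω, G (k + 1) ω ∂P
          = ∫ ω, (P[(fun ω => G k ω * g k ω)|(hstop k).measurableSpace]) ω ∂P := by
        rw [integral_condExp (hle k), hsplit]
      have h2 : ∫ ω, (P[(fun ω => G k ω * g k ω)|(hstop k).measurableSpace]) ω ∂P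
          = ∫ ω, G k ω * (P[g k|(hstop k).measurableSpace]) ω ∂P :=
        integral_congr_ae hpull
      have h3 : ∫ ω, G k ω * (P[g k|(hstop k).measurableSpace]) ω ∂P
          ≤ ∫ ω, 2 * G k ω ∂P := by
        refine integral_mono_ae (integrable_condExp.congr hpull) ((hGint k).const_mul 2) ?_
        filter_upwards [hgcond k] with ω hω
        calc G k ω * (P[g k|(hstop k).measurableSpace]) ω ≤ G k ω * 2 :=
              mul_le_mul_of_nonneg_left hω (by linarith [hGpos k ω])
          _ = 2 * G k ω := by ring
      rw [h1, h2]
      calc ∫ ω, G k ω * (P[g k|(hstop k).measurableSpace]) ω ∂P ≤ ∫ ω, 2 * G k ω ∂P := h3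
        _ = 2 * ∫ ω, G k ω ∂P := integral_const_mul 2 _
        _ ≤ 2 * 2 ^ k := by linarith
        _ = 2 ^ (k + 1) := by ring
  -- the event and the pointwise lower bound on G k there
  set A : ℕ → Set Ω := fun k => {ω | (Γ k ω : ℝ) < (C₀ / 4) * k * (N : ℝ) ^ 2} with hA_def
  have hAmeas : ∀ k, MeasurableSet (A k) := by
    intro k
    have : Measurable (fun ω => (Γ k ω : ℝ)) :=
      (measurable_from_top (f := fun n : ℕ => (n : ℝ))).comp ((hΓm k).mono (hle k) le_rfl)
    exact this measurableSet_Iio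
  have hinc1 : ∀ n ω, (1 : ℝ) ≤ (Γ (n + 1) ω : ℝ) - (Γ n ω : ℝ) := by
    intro n ω
    have := hmono n ω
    have : (Γ n ω : ℝ) + 1 ≤ (Γ (n + 1) ω : ℝ) := by exact_mod_cast this
    linarith
  have hptwise : ∀ k, 1 ≤ k → ∀ ω ∈ A k, Real.exp ((3 / 4) * k * Real.log 3) ≤ G k ω := by
    intro k hk ω hω
    simp only [hA_def, Set.mem_setOf_eq] at hω
    -- telescoping
    have htel : (Γ k ω : ℝ) = ∑ n ∈ Finset.range k,
        ((Γ (n + 1) ω : ℝ) - (Γ n ω : ℝ)) := by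
      rw [Finset.sum_range_sub (f := fun n => (Γ n ω : ℝ))]
      simp [h0 ω]
    set Tb := (Finset.range k).filter
      (fun n => p < ((Γ (n + 1) ω : ℝ) - (Γ n ω : ℝ))) with hTb_def
    set Ts := (Finset.range k).filter
      (fun n => ¬ p < ((Γ (n + 1) ω : ℝ) - (Γ n ω : ℝ))) with hTs_def
    have hcard : Tb.card + Ts.card = k := by
      rw [hTb_def, hTs_def, Finset.card_filter_add_card_filter_not, Finset.card_range]
    -- Γ k ≥ |Tb| * p
    have hbig : (Tb.card : ℝ) * p ≤ (Γ k ω : ℝ) := by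
      have hsub : ∑ n ∈ Tb, ((Γ (n + 1) ω : ℝ) - (Γ n ω : ℝ))
          ≤ ∑ n ∈ Finset.range k, ((Γ (n + 1) ω : ℝ) - (Γ n ω : ℝ)) := by
        refine Finset.sum_le_sum_of_subset_of_nonneg (Finset.filter_subset _ _) ?_
        intro n _ _; linarith [hinc1 n ω]
      have hlow : (Tb.card : ℝ) * p ≤ ∑ n ∈ Tb, ((Γ (n + 1) ω : ℝ) - (Γ n ω : ℝ)) := by
        calc (Tb.card : ℝ) * p = ∑ _n ∈ Tb, p := by rw [Finset.sum_const, nsmul_eq_mul]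
          _ ≤ _ := Finset.sum_le_sum (fun n hn => by
              have := (Finset.mem_filter.mp hn).2; linarith)
      rw [htel]; linarith
    -- p > 0 on the event
    have hppos : 0 < p := by
      rcases lt_or_eq_of_le hp0 with h | h
      · exact h
      · exfalso
        have h1 : (C₀ / 4) * k * (N : ℝ) ^ 2 = p * k / 4 := by rw [hp_def]; ring
        have h2 : (0 : ℝ) ≤ (Γ k ω : ℝ) := Nat.cast_nonneg _
        rw [h1, ← h] at hω
        linarith
    -- counting
    have hΓlt : (Γ k ω : ℝ) < p * k / 4 := by
      have h1 : (C₀ / 4) * k * (N : ℝ) ^ 2 = p * k / 4 := by rw [hp_def]; ring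
      rwa [h1] at hω
    have hTb_lt : (Tb.card : ℝ) < k / 4 := by
      have h := lt_of_le_of_lt hbig hΓlt
      have h2 : (Tb.card : ℝ) * p < ((k : ℝ) / 4) * p := by
        calc (Tb.card : ℝ) * p < p * k / 4 := h
          _ = ((k : ℝ) / 4) * p := by ring
      exact lt_of_mul_lt_mul_right h2 hppos.le
    have hTs_ge : (3 / 4 : ℝ) * k ≤ (Ts.card : ℝ) := by
      have : (Ts.card : ℝ) = k - Tb.card := by
        have := hcard
        push_cast [← this]
        ring
      rw [this]; linarith
    -- G k ω = 3 ^ |Ts|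
    have hprod : G k ω = 3 ^ Ts.card := by
      have hgval : ∀ n, g n ω =
          if p < ((Γ (n + 1) ω : ℝ) - (Γ n ω : ℝ)) then (1 : ℝ) else 3 := by
        intro n
        simp only [hg_def, hI_def]
        split_ifs <;> norm_num
      calc G k ω = ∏ n ∈ Finset.range k,
            (if p < ((Γ (n + 1) ω : ℝ) - (Γ n ω : ℝ)) then (1 : ℝ) else 3) :=
            Finset.prod_congr rfl (fun n _ => hgval n)
        _ = (∏ _n ∈ Tb, (1 : ℝ)) * ∏ _n ∈ Ts, (3 : ℝ) := Finset.prod_ite _ _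
        _ = 3 ^ Ts.card := by simp
    rw [hprod]
    have h3 : (3 : ℝ) ^ Ts.card = Real.exp ((Ts.card : ℝ) * Real.log 3) := by
      rw [Real.exp_nat_mul, Real.exp_log (by norm_num : (0:ℝ) < 3)]
    rw [h3, Real.exp_le_exp]
    have hlog3 : 0 ≤ Real.log 3 := Real.log_nonneg (by norm_num)
    calc (3 / 4 : ℝ) * k * Real.log 3 ≤ (Ts.card : ℝ) * Real.log 3 :=
        mul_le_mul_of_nonneg_right hTs_ge hlog3
      _ = _ := rfl
  -- Markov: the main bound
  have hmain : ∀ k : ℕ, 1 ≤ k →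
      (P (A k)).toReal ≤ Real.exp (-c * k) := by
    intro k hk
    set L : ℝ := Real.exp ((3 / 4) * k * Real.log 3) with hL_def
    have hLpos : 0 < L := Real.exp_pos _
    have h1 : (P (A k)).toReal * L ≤ ∫ ω, G k ω ∂P := by
      have hA_fin : P (A k) ≠ ⊤ := measure_ne_top P _
      have h2 : L * (P (A k)).toReal ≤ ∫ ω in A k, G k ω ∂P :=
        setIntegral_ge_of_const_le_real (hAmeas k) hA_fin (fun ω hω => hptwise k hk ω hω)
          ((hGint k).integrableOn)
      have h3 : ∫ ω in A k, G k ω ∂P ≤ ∫ ω, G k ω ∂P :=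
        setIntegral_le_integral (hGint k)
          (by filter_upwards with ω; simp only [Pi.zero_apply]; linarith [hGpos k ω])
      linarith
    have h4 : (P (A k)).toReal * L ≤ 2 ^ k := le_trans h1 (hGexp k)
    have h5 : (P (A k)).toReal ≤ 2 ^ k / L := by
      rw [le_div_iff₀ hLpos]; exact h4
    refine h5.trans ?_
    have h6 : (2 : ℝ) ^ k = Real.exp ((k : ℝ) * Real.log 2) := by
      rw [Real.exp_nat_mul, Real.exp_log (by norm_num : (0:ℝ) < 2)]
    rw [h6, hL_def, ← Real.exp_sub]
    rw [Real.exp_le_exp]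
    have hck : -c * (k : ℝ) = (k : ℝ) * Real.log 2 - (3 / 4) * (k : ℝ) * Real.log 3 := by
      simp only [hc_def]; ring
    linarith [hck.le, hck.ge]
  refine ⟨hmain, ?_⟩
  -- the summability part
  refine ⟨(1 - Real.exp (-c))⁻¹, ?_⟩
  intro n
  set r : ℝ := Real.exp (-c) with hr_def
  have hr0 : 0 ≤ r := (Real.exp_pos _).le
  have hr1 : r < 1 := Real.exp_lt_one_iff.mpr (by linarith)
  calc ∑ k ∈ Finset.Icc 1 n, (P (A k)).toReal
      ≤ ∑ k ∈ Finset.Icc 1 n, r ^ k := by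
        refine Finset.sum_le_sum (fun k hk => ?_)
        have hk1 : 1 ≤ k := (Finset.mem_Icc.mp hk).1
        refine (hmain k hk1).trans (le_of_eq ?_)
        rw [hr_def, ← Real.exp_nat_mul]
        ring_nf
    _ ≤ ∑ k ∈ Finset.range (n + 1), r ^ k := by
        refine Finset.sum_le_sum_of_subset_of_nonneg ?_ (fun k _ _ => pow_nonneg hr0 k)
        intro k hk
        simp only [Finset.mem_Icc] at hk
        simp only [Finset.mem_range]
        omega
    _ ≤ (1 - r)⁻¹ := stmt6_geom_aux hr0 hr1 (n + 1)
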